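/- Let R be a commutative ring with unity that admits a nontrivial polynomial characteristic function, i.e., there exist a subset S ⊆ R with S nonempty and S ≠ R, and a polynomial f ∈ R[X] such that f(r) = 1 for all r ∈ S and f(r) = 0 for all r ∉ S. Then R is a local ring (R has a unique maximal ideal). -/

import Mathlib

/-- **Lemma 2.5 (consequence).** If a nonzero commutative ring with unity `R` admits a
nontrivial polynomial characteristic function (the indicator function of some nonempty proper
subset of `R` is given by a polynomial), then `R` is local. -/
theorem stmt_10 {R : Type*} [CommRing R] [Nontrivial R]
    (h : ∃ (S : Set R) (f : Polynomial R), S.Nonempty ∧ S ≠ Set.univ ∧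
      (∀ r ∈ S, f.eval r = 1) ∧ (∀ r ∉ S, f.eval r = 0)) :
    IsLocalRing R := by
  obtain ⟨S, f, ⟨s, hs⟩, hne, h1, h0⟩ := h
  obtain ⟨t, ht⟩ : ∃ t, t ∉ S := by
    by_contra hc
    push_neg at hc
    exact hne (Set.eq_univ_of_forall hc)
  -- g(r) = f((s-t)*r + t); g(0)=0, g(1)=1, g takes values in {0,1}
  set g : Polynomial R := f.comp (Polynomial.C (s - t) * Polynomial.X + Polynomial.C t) with hg
  have hgeval : ∀ r : R, g.eval r = f.eval ((s - t) * r + t) := by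
    intro r; simp [hg]
  have hg0 : g.eval 0 = 0 := by
    rw [hgeval]; simpa using h0 t ht
  have hg1 : g.eval 1 = 1 := by
    rw [hgeval]; simpa using h1 s hs
  have hval : ∀ r : R, g.eval r = 0 ∨ g.eval r = 1 := by
    intro r
    rw [hgeval]
    by_cases hm : (s - t) * r + t ∈ S
    · exact Or.inr (h1 _ hm)
    · exact Or.inl (h0 _ hm)
  apply IsLocalRing.of_isUnit_or_isUnit_one_sub_self
  intro a
  rcases hval a with ha | ha
  · -- g(a) = 0 : consider p(X) = g(X + a), p(0)=0, p(1-a)=1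
    right
    set p : Polynomial R := g.comp (Polynomial.X + Polynomial.C a) with hp
    have hp0 : p.coeff 0 = 0 := by
      have : p.eval 0 = 0 := by simpa [hp] using ha
      simpa [Polynomial.coeff_zero_eq_eval_zero] using this
    obtain ⟨q, hq⟩ := (Polynomial.X_dvd_iff).mpr hp0
    have : p.eval (1 - a) = 1 := by simpa [hp] using hg1
    rw [hq] at this
    simp only [Polynomial.eval_mul, Polynomial.eval_X] at this
    exact IsUnit.of_mul_eq_one _ this
  · -- g(a) = 1 : g = X * h since g(0)=0
    left
    have hc0 : g.coeff 0 = 0 := by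
      simpa [Polynomial.coeff_zero_eq_eval_zero] using hg0
    obtain ⟨q, hq⟩ := (Polynomial.X_dvd_iff).mpr hc0
    rw [hq] at ha
    simp only [Polynomial.eval_mul, Polynomial.eval_X] at ha
    exact IsUnit.of_mul_eq_one _ ha
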